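/- For n >= 1, the number of ascent sequences of length n avoiding the three patterns 0102, 0112, and 0120 equals 2^{n-1} + C(n, 3). -/

import Mathlib

/-- Number of ascents of a sequence (list) of natural numbers. -/
def asc (l : List ℕ) : ℕ :=
  ((List.range (l.length - 1)).filter (fun j => l.getD j 0 < l.getD (j + 1) 0)).length

/-- `x` is an ascent sequence: nonempty, starts with 0, and each later entry is
at most one more than the number of ascents of the preceding prefix. -/
def IsAscSeq (x : List ℕ) : Prop :=
  x ≠ [] ∧ x.getD 0 0 = 0 ∧
    ∀ i, 1 ≤ i → i < x.length → x.getD i 0 ≤ 1 + asc (x.take i)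

/-- `x` contains the pattern `p`: some subsequence of `x` is order-isomorphic
(including equalities) to `p`, i.e. its reduction equals `p`. -/
def Contains (p x : List ℕ) : Prop :=
  ∃ y : List ℕ, y.Sublist x ∧ y.length = p.length ∧
    ∀ i j, i < p.length → j < p.length →
      (y.getD i 0 < y.getD j 0 ↔ p.getD i 0 < p.getD j 0)

/-- `x` avoids the pattern `p`. -/
def Avoids (p x : List ℕ) : Prop := ¬ Contains p x

/-! ### infrastructure -/

def ascTo (l : List ℕ) (m : ℕ) : ℕ :=
  ((List.range m).filter (fun j => l.getD j 0 < l.getD (j + 1) 0)).length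

lemma asc_eq_ascTo (l : List ℕ) : asc l = ascTo l (l.length - 1) := rfl

lemma getD_take {l : List ℕ} {m p : ℕ} (h : p < m) : (l.take m).getD p 0 = l.getD p 0 := by
  rcases Nat.lt_or_ge p l.length with h' | h'
  · rw [List.getD_eq_getElem _ _ (by simp [h, h']), List.getD_eq_getElem _ _ h',
      List.getElem_take]
  · rw [List.getD_eq_default _ _ (by simp; omega), List.getD_eq_default _ _ h']

lemma ascTo_take {l : List ℕ} {m : ℕ} (hm : m ≤ l.length) :
    asc (l.take m) = ascTo l (m - 1) := by
  rw [asc_eq_ascTo, List.length_take, min_eq_left hm]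
  unfold ascTo
  congr 1
  apply List.filter_congr
  intro j hj
  simp only [List.mem_range] at hj
  rw [getD_take (by omega), getD_take (by omega)]

lemma ascTo_succ (l : List ℕ) (m : ℕ) :
    ascTo l (m + 1) = ascTo l m + if l.getD m 0 < l.getD (m + 1) 0 then 1 else 0 := by
  unfold ascTo
  rw [List.range_succ, List.filter_append, List.length_append]
  simp only [List.filter_singleton]
  split_ifs with h <;>
    simp only [List.getD_eq_getElem?_getD] at h <;> simp [h]

lemma ascTo_mono (l : List ℕ) {m m' : ℕ} (h : m ≤ m') : ascTo l m ≤ ascTo l m' := by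
  unfold ascTo
  exact ((List.range_sublist.2 h).filter _).length_le

lemma isAscSeq_of_step {l : List ℕ} (hne : l ≠ []) (h0 : l.getD 0 0 = 0)
    (hstep : ∀ i, i + 1 < l.length → l.getD (i + 1) 0 ≤ l.getD i 0 + 1) : IsAscSeq l := by
  have key : ∀ m, m < l.length → l.getD m 0 ≤ ascTo l m := by
    intro m
    induction m with
    | zero => intro _; rw [h0]; exact Nat.zero_le _
    | succ m ih =>
      intro hm
      have h1 := ih (by omega)
      have h2 := hstep m hm
      have h3 := ascTo_succ l m
      split_ifs at h3 with h4 <;> omega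
  refine ⟨hne, h0, ?_⟩
  intro i h1 h2
  have := key (i - 1) (by omega)
  have h2' := hstep (i - 1) (by omega)
  rw [ascTo_take (by omega)]
  have heq : i - 1 + 1 = i := by omega
  rw [heq] at h2'
  omega

/-- upper bound for asc via a window of possible ascent positions -/
lemma asc_le {l : List ℕ} {lo hi : ℕ}
    (h : ∀ j, l.getD j 0 < l.getD (j + 1) 0 → lo ≤ j ∧ j < hi) :
    asc l ≤ hi - lo := by
  rw [asc_eq_ascTo]
  unfold ascTo
  set L := (List.range (l.length - 1)).filter (fun j => l.getD j 0 < l.getD (j + 1) 0) with hL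
  have hnd : L.Nodup := List.nodup_range.filter _
  have hsub : ∀ j ∈ L, j ∈ Finset.Ico lo hi := by
    intro j hj
    rw [hL, List.mem_filter] at hj
    have := h j (by simpa using hj.2)
    simp [Finset.mem_Ico]; omega
  calc L.length = L.toFinset.card := (List.toFinset_card_of_nodup hnd).symm
    _ ≤ (Finset.Ico lo hi).card := Finset.card_le_card (fun j hj => hsub j (List.mem_toFinset.1 hj))
    _ = hi - lo := Nat.card_Ico lo hi

/-! ### the two families -/

def vspec (a k i t : ℕ) : ℕ := if t ≤ a + k + 2 + i then min (t - a) (k + 2) else k + 1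

def spec (a k i j : ℕ) : List ℕ :=
  List.ofFn (n := a + k + i + j + 3) (fun t => vspec a k i t.1)

def bpad (v : List Bool) : List ℕ := 0 :: v.map (fun b => cond b 1 0)

@[simp] lemma length_spec (a k i j : ℕ) : (spec a k i j).length = a + k + i + j + 3 := by
  simp [spec]

@[simp] lemma length_bpad (v : List Bool) : (bpad v).length = v.length + 1 := by
  simp [bpad]

lemma getD_spec {a k i j t : ℕ} (h : t < a + k + i + j + 3) :
    (spec a k i j).getD t 0 = vspec a k i t := by
  rw [List.getD_eq_getElem _ _ (by simpa using h)]
  simp only [spec]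
  rw [List.getElem_ofFn]

lemma bpad_le_one (v : List Bool) (t : ℕ) : (bpad v).getD t 0 ≤ 1 := by
  rcases Nat.lt_or_ge t (bpad v).length with h | h
  · rw [List.getD_eq_getElem _ _ h]
    set e := (bpad v)[t] with he
    have hm : e ∈ bpad v := he ▸ List.getElem_mem _
    simp only [bpad, List.mem_cons, List.mem_map] at hm
    rcases hm with h2 | ⟨b, _, h2⟩
    · omega
    · cases b <;> simp at h2 <;> omega
  · rw [List.getD_eq_default _ _ h]; omega

lemma bpad_head (v : List Bool) : (bpad v).getD 0 0 = 0 := rfl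

lemma isAscSeq_bpad (v : List Bool) : IsAscSeq (bpad v) := by
  refine isAscSeq_of_step (by simp [bpad]) (bpad_head v) ?_
  intro t _
  have := bpad_le_one v (t + 1)
  omega

lemma isAscSeq_spec (a k i j : ℕ) : IsAscSeq (spec a k i j) := by
  refine isAscSeq_of_step (by simp [spec, List.ofFn_eq_nil_iff]) ?_ ?_
  · rw [getD_spec (by omega)]
    simp [vspec]
  · intro t ht
    simp only [length_spec] at ht
    rw [getD_spec (by omega), getD_spec (by omega)]
    simp only [vspec]
    split_ifs <;> omega

/-! ### length-4 sublists -/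

lemma sublist4_intro {l : List ℕ} {t0 t1 t2 t3 : ℕ}
    (h01 : t0 < t1) (h12 : t1 < t2) (h23 : t2 < t3) (h3 : t3 < l.length) :
    List.Sublist [l.getD t0 0, l.getD t1 0, l.getD t2 0, l.getD t3 0] l := by
  have ht0 : t0 < l.length := by omega
  have ht1 : t1 < l.length := by omega
  have ht2 : t2 < l.length := by omega
  rw [List.sublist_iff_exists_fin_orderEmbedding_get_eq]
  have hsm : StrictMono (fun m : Fin 4 =>
      (![⟨t0, ht0⟩, ⟨t1, ht1⟩, ⟨t2, ht2⟩, ⟨t3, h3⟩] : Fin 4 → Fin l.length) m) := by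
    intro u v huv
    fin_cases u <;> fin_cases v <;> simp_all <;> omega
  refine ⟨OrderEmbedding.ofStrictMono _ hsm, ?_⟩
  intro ix
  fin_cases ix <;>
    simp [OrderEmbedding.ofStrictMono, List.get_eq_getElem,
      List.getElem?_eq_getElem ht0, List.getElem?_eq_getElem ht1,
      List.getElem?_eq_getElem ht2, List.getElem?_eq_getElem h3]
      <;> rfl

lemma sublist4_elim {b0 b1 b2 b3 : ℕ} {l : List ℕ}
    (h : List.Sublist [b0, b1, b2, b3] l) :
    ∃ t0 t1 t2 t3, t0 < t1 ∧ t1 < t2 ∧ t2 < t3 ∧ t3 < l.length ∧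
      l.getD t0 0 = b0 ∧ l.getD t1 0 = b1 ∧ l.getD t2 0 = b2 ∧ l.getD t3 0 = b3 := by
  rw [List.sublist_iff_exists_fin_orderEmbedding_get_eq] at h
  obtain ⟨f, hf⟩ := h
  have hmono : StrictMono f := f.strictMono
  have h0 := hf ⟨0, by simp⟩
  have h1 := hf ⟨1, by simp⟩
  have h2 := hf ⟨2, by simp⟩
  have h3 := hf ⟨3, by simp⟩
  simp only [List.get_eq_getElem] at h0 h1 h2 h3
  refine ⟨f ⟨0, by simp⟩, f ⟨1, by simp⟩, f ⟨2, by simp⟩, f ⟨3, by simp⟩,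
    hmono (by simp [Fin.mk_lt_mk]), hmono (by simp [Fin.mk_lt_mk]), hmono (by simp [Fin.mk_lt_mk]),
    (f _).2, ?_, ?_, ?_, ?_⟩
  · rw [List.getD_eq_getElem _ _ (f _).2]; simpa using h0.symm
  · rw [List.getD_eq_getElem _ _ (f _).2]; simpa using h1.symm
  · rw [List.getD_eq_getElem _ _ (f _).2]; simpa using h2.symm
  · rw [List.getD_eq_getElem _ _ (f _).2]; simpa using h3.symm

/-! ### pattern helpers -/

lemma contains_intro_0102 {x : List ℕ} {t0 t1 t2 t3 : ℕ}
    (h01 : t0 < t1) (h12 : t1 < t2) (h23 : t2 < t3) (h3 : t3 < x.length)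
    (hv1 : x.getD t0 0 < x.getD t1 0) (hv2 : x.getD t2 0 = x.getD t0 0)
    (hv3 : x.getD t1 0 < x.getD t3 0) : Contains [0, 1, 0, 2] x := by
  refine ⟨[x.getD t0 0, x.getD t1 0, x.getD t2 0, x.getD t3 0],
    sublist4_intro h01 h12 h23 h3, by simp, ?_⟩
  intro i j hi hj
  replace hi : i < 4 := by simpa using hi
  replace hj : j < 4 := by simpa using hj
  simp only [List.getD_eq_getElem?_getD] at hv1 hv2 hv3
  interval_cases i <;> interval_cases j <;> simp <;> omega

lemma contains_intro_0112 {x : List ℕ} {t0 t1 t2 t3 : ℕ}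
    (h01 : t0 < t1) (h12 : t1 < t2) (h23 : t2 < t3) (h3 : t3 < x.length)
    (hv1 : x.getD t0 0 < x.getD t1 0) (hv2 : x.getD t2 0 = x.getD t1 0)
    (hv3 : x.getD t1 0 < x.getD t3 0) : Contains [0, 1, 1, 2] x := by
  refine ⟨[x.getD t0 0, x.getD t1 0, x.getD t2 0, x.getD t3 0],
    sublist4_intro h01 h12 h23 h3, by simp, ?_⟩
  intro i j hi hj
  replace hi : i < 4 := by simpa using hi
  replace hj : j < 4 := by simpa using hj
  simp only [List.getD_eq_getElem?_getD] at hv1 hv2 hv3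
  interval_cases i <;> interval_cases j <;> simp <;> omega

lemma contains_intro_0120 {x : List ℕ} {t0 t1 t2 t3 : ℕ}
    (h01 : t0 < t1) (h12 : t1 < t2) (h23 : t2 < t3) (h3 : t3 < x.length)
    (hv1 : x.getD t0 0 < x.getD t1 0) (hv2 : x.getD t1 0 < x.getD t2 0)
    (hv3 : x.getD t3 0 = x.getD t0 0) : Contains [0, 1, 2, 0] x := by
  refine ⟨[x.getD t0 0, x.getD t1 0, x.getD t2 0, x.getD t3 0],
    sublist4_intro h01 h12 h23 h3, by simp, ?_⟩
  intro i j hi hj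
  replace hi : i < 4 := by simpa using hi
  replace hj : j < 4 := by simpa using hj
  simp only [List.getD_eq_getElem?_getD] at hv1 hv2 hv3
  interval_cases i <;> interval_cases j <;> simp <;> omega

lemma contains_elim_0102 {x : List ℕ} (h : Contains [0, 1, 0, 2] x) :
    ∃ t0 t1 t2 t3, t0 < t1 ∧ t1 < t2 ∧ t2 < t3 ∧ t3 < x.length ∧
      x.getD t0 0 < x.getD t1 0 ∧ x.getD t2 0 = x.getD t0 0 ∧ x.getD t1 0 < x.getD t3 0 := by
  obtain ⟨y, hsub, hlen, hiso⟩ := h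
  simp only [List.length_cons, List.length_nil] at hlen
  rcases y with _ | ⟨b0, _ | ⟨b1, _ | ⟨b2, _ | ⟨b3, _ | ⟨b4, y⟩⟩⟩⟩⟩ <;> simp at hlen
  obtain ⟨t0, t1, t2, t3, h01, h12, h23, h3, e0, e1, e2, e3⟩ := sublist4_elim hsub
  have A := hiso 0 1 (by norm_num) (by norm_num)
  have B1 := hiso 0 2 (by norm_num) (by norm_num)
  have B2 := hiso 2 0 (by norm_num) (by norm_num)
  have C := hiso 1 3 (by norm_num) (by norm_num)
  simp at A B1 B2 C
  exact ⟨t0, t1, t2, t3, h01, h12, h23, h3, by omega⟩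

lemma contains_elim_0112 {x : List ℕ} (h : Contains [0, 1, 1, 2] x) :
    ∃ t0 t1 t2 t3, t0 < t1 ∧ t1 < t2 ∧ t2 < t3 ∧ t3 < x.length ∧
      x.getD t0 0 < x.getD t1 0 ∧ x.getD t2 0 = x.getD t1 0 ∧ x.getD t1 0 < x.getD t3 0 := by
  obtain ⟨y, hsub, hlen, hiso⟩ := h
  simp only [List.length_cons, List.length_nil] at hlen
  rcases y with _ | ⟨b0, _ | ⟨b1, _ | ⟨b2, _ | ⟨b3, _ | ⟨b4, y⟩⟩⟩⟩⟩ <;> simp at hlen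
  obtain ⟨t0, t1, t2, t3, h01, h12, h23, h3, e0, e1, e2, e3⟩ := sublist4_elim hsub
  have A := hiso 0 1 (by norm_num) (by norm_num)
  have B1 := hiso 1 2 (by norm_num) (by norm_num)
  have B2 := hiso 2 1 (by norm_num) (by norm_num)
  have C := hiso 1 3 (by norm_num) (by norm_num)
  simp at A B1 B2 C
  exact ⟨t0, t1, t2, t3, h01, h12, h23, h3, by omega⟩

lemma contains_elim_0120 {x : List ℕ} (h : Contains [0, 1, 2, 0] x) :
    ∃ t0 t1 t2 t3, t0 < t1 ∧ t1 < t2 ∧ t2 < t3 ∧ t3 < x.length ∧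
      x.getD t0 0 < x.getD t1 0 ∧ x.getD t1 0 < x.getD t2 0 ∧ x.getD t3 0 = x.getD t0 0 := by
  obtain ⟨y, hsub, hlen, hiso⟩ := h
  simp only [List.length_cons, List.length_nil] at hlen
  rcases y with _ | ⟨b0, _ | ⟨b1, _ | ⟨b2, _ | ⟨b3, _ | ⟨b4, y⟩⟩⟩⟩⟩ <;> simp at hlen
  obtain ⟨t0, t1, t2, t3, h01, h12, h23, h3, e0, e1, e2, e3⟩ := sublist4_elim hsub
  have A := hiso 0 1 (by norm_num) (by norm_num)
  have B := hiso 1 2 (by norm_num) (by norm_num)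
  have C1 := hiso 0 3 (by norm_num) (by norm_num)
  have C2 := hiso 3 0 (by norm_num) (by norm_num)
  simp at A B C1 C2
  exact ⟨t0, t1, t2, t3, h01, h12, h23, h3, by omega⟩

/-! ### avoidance -/

lemma avoids_bpad (v : List Bool) :
    Avoids [0, 1, 0, 2] (bpad v) ∧ Avoids [0, 1, 1, 2] (bpad v) ∧
      Avoids [0, 1, 2, 0] (bpad v) := by
  refine ⟨fun h => ?_, fun h => ?_, fun h => ?_⟩
  · obtain ⟨t0, t1, t2, t3, _, _, _, _, hv1, hv2, hv3⟩ := contains_elim_0102 h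
    have := bpad_le_one v t0; have := bpad_le_one v t1; have := bpad_le_one v t3
    omega
  · obtain ⟨t0, t1, t2, t3, _, _, _, _, hv1, hv2, hv3⟩ := contains_elim_0112 h
    have := bpad_le_one v t0; have := bpad_le_one v t1; have := bpad_le_one v t3
    omega
  · obtain ⟨t0, t1, t2, t3, _, _, _, _, hv1, hv2, hv3⟩ := contains_elim_0120 h
    have := bpad_le_one v t0; have := bpad_le_one v t1; have := bpad_le_one v t2
    omega

lemma avoids_spec (a k i j : ℕ) :
    Avoids [0, 1, 0, 2] (spec a k i j) ∧ Avoids [0, 1, 1, 2] (spec a k i j) ∧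
      Avoids [0, 1, 2, 0] (spec a k i j) := by
  refine ⟨fun h => ?_, fun h => ?_, fun h => ?_⟩
  · obtain ⟨t0, t1, t2, t3, h01, h12, h23, h3, hv1, hv2, hv3⟩ := contains_elim_0102 h
    simp only [length_spec] at h3
    simp only [getD_spec (show t0 < a+k+i+j+3 by omega), getD_spec (show t1 < a+k+i+j+3 by omega),
      getD_spec (show t2 < a+k+i+j+3 by omega), getD_spec (show t3 < a+k+i+j+3 by omega)]
      at hv1 hv2 hv3
    simp only [vspec] at hv1 hv2 hv3
    split_ifs at hv1 hv2 hv3 <;> omega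
  · obtain ⟨t0, t1, t2, t3, h01, h12, h23, h3, hv1, hv2, hv3⟩ := contains_elim_0112 h
    simp only [length_spec] at h3
    simp only [getD_spec (show t0 < a+k+i+j+3 by omega), getD_spec (show t1 < a+k+i+j+3 by omega),
      getD_spec (show t2 < a+k+i+j+3 by omega), getD_spec (show t3 < a+k+i+j+3 by omega)]
      at hv1 hv2 hv3
    simp only [vspec] at hv1 hv2 hv3
    split_ifs at hv1 hv2 hv3 <;> omega
  · obtain ⟨t0, t1, t2, t3, h01, h12, h23, h3, hv1, hv2, hv3⟩ := contains_elim_0120 h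
    simp only [length_spec] at h3
    simp only [getD_spec (show t0 < a+k+i+j+3 by omega), getD_spec (show t1 < a+k+i+j+3 by omega),
      getD_spec (show t2 < a+k+i+j+3 by omega), getD_spec (show t3 < a+k+i+j+3 by omega)]
      at hv1 hv2 hv3
    simp only [vspec] at hv1 hv2 hv3
    split_ifs at hv1 hv2 hv3 <;> omega

/-! ### closure under removing the last element -/

lemma getD_append_lt (y : List ℕ) (c : ℕ) {t : ℕ} (h : t < y.length) :
    (y ++ [c]).getD t 0 = y.getD t 0 := List.getD_append _ _ _ _ h

lemma getD_append_last (y : List ℕ) (c : ℕ) : (y ++ [c]).getD y.length 0 = c := by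
  rw [List.getD_append_right _ _ _ _ le_rfl]
  simp

lemma isAscSeq_append_elim {y : List ℕ} {c : ℕ} (h : IsAscSeq (y ++ [c])) (hy : y ≠ []) :
    IsAscSeq y := by
  have hl : 0 < y.length := List.length_pos_iff.2 hy
  refine ⟨hy, ?_, ?_⟩
  · rw [← getD_append_lt y c hl]; exact h.2.1
  · intro t h1 h2
    have h3 := h.2.2 t h1 (by rw [List.length_append]; omega)
    rw [getD_append_lt y c h2, List.take_append_of_le_length (by omega)] at h3
    exact h3

lemma last_bound {y : List ℕ} {c : ℕ} (h : IsAscSeq (y ++ [c])) (hy : y ≠ []) :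
    c ≤ 1 + asc y := by
  have hl : 0 < y.length := List.length_pos_iff.2 hy
  have h3 := h.2.2 y.length (by omega) (by rw [List.length_append]; simp)
  rwa [getD_append_last, List.take_left] at h3

lemma contains_sublist {p y x : List ℕ} (h : Contains p y) (hs : List.Sublist y x) :
    Contains p x := by
  obtain ⟨z, hz, h1, h2⟩ := h
  exact ⟨z, hz.trans hs, h1, h2⟩

lemma avoids_append_elim {p y : List ℕ} {c : ℕ} (h : Avoids p (y ++ [c])) : Avoids p y :=
  fun hc => h (contains_sublist hc (List.sublist_append_left y [c]))

/-! ### asc bounds -/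

lemma asc_binary_le {y : List ℕ} {q : ℕ} (hlen : y.length = q + 1)
    (h0 : ∀ r < q, y.getD r 0 = 0) (h1 : y.getD q 0 = 1) : asc y ≤ 1 := by
  have := asc_le (l := y) (lo := q - 1) (hi := q) ?_
  · omega
  · intro j hj
    have hj1 : j + 1 = q := by
      by_contra hne
      rcases Nat.lt_or_ge (j + 1) q with h' | h'
      · rw [h0 _ h'] at hj; omega
      · have : j + 1 > q := by omega
        rw [List.getD_eq_default _ _ (show y.length ≤ j + 1 by omega)] at hj; omega
    omega

lemma asc_spec_le (a k i j : ℕ) : asc (spec a k i j) ≤ k + 2 := by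
  have := asc_le (l := spec a k i j) (lo := a) (hi := a + k + 2) ?_
  · omega
  · intro t ht
    rcases Nat.lt_or_ge (t + 1) (a + k + i + j + 3) with h' | h'
    · rw [getD_spec (by omega), getD_spec h'] at ht
      simp only [vspec] at ht
      split_ifs at ht <;> omega
    · rw [List.getD_eq_default _ _ (show (spec a k i j).length ≤ t + 1 by simp; omega)] at ht
      omega

/-! ### list equalities -/

lemma list_eq_of_getD {l l' : List ℕ} (hl : l.length = l'.length)
    (h : ∀ t, t < l.length → l.getD t 0 = l'.getD t 0) : l = l' := by
  apply List.ext_getElem hl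
  intro t h1 h2
  have := h t h1
  rwa [List.getD_eq_getElem _ _ h1, List.getD_eq_getElem _ _ h2] at this

lemma spec_append_lt (a k i j : ℕ) : spec a k i j ++ [k + 1] = spec a k i (j + 1) := by
  apply list_eq_of_getD (by simp; omega)
  intro t ht
  simp only [List.length_append, length_spec, List.length_cons, List.length_nil] at ht
  rcases Nat.lt_or_ge t (a + k + i + j + 3) with h' | h'
  · rw [getD_append_lt _ _ (by simpa using h'), getD_spec h', getD_spec (by omega)]
  · have ht' : t = a + k + i + j + 3 := by omega
    subst ht'
    rw [show a + k + i + j + 3 = (spec a k i j).length by simp, getD_append_last,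
      getD_spec (by simp only [length_spec]; omega)]
    simp only [length_spec, vspec]
    split_ifs <;> omega

lemma spec_append_eq (a k i : ℕ) : spec a k i 0 ++ [k + 2] = spec a k (i + 1) 0 := by
  apply list_eq_of_getD (by simp; omega)
  intro t ht
  simp only [List.length_append, length_spec, List.length_cons, List.length_nil] at ht
  rcases Nat.lt_or_ge t (a + k + i + 0 + 3) with h' | h'
  · rw [getD_append_lt _ _ (by simpa using h'), getD_spec h', getD_spec (by omega)]
    simp only [vspec]
    split_ifs <;> omega
  · have ht' : t = a + k + i + 3 := by omega
    subst ht'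
    rw [show a + k + i + 3 = (spec a k i 0).length by simp, getD_append_last,
      getD_spec (by simp only [length_spec]; omega)]
    simp only [length_spec, vspec]
    split_ifs <;> omega

lemma spec_append_succ (a k : ℕ) : spec a k 0 0 ++ [k + 3] = spec a (k + 1) 0 0 := by
  apply list_eq_of_getD (by simp; omega)
  intro t ht
  simp only [List.length_append, length_spec, List.length_cons, List.length_nil] at ht
  rcases Nat.lt_or_ge t (a + k + 0 + 0 + 3) with h' | h'
  · rw [getD_append_lt _ _ (by simpa using h'), getD_spec h', getD_spec (by omega)]
    simp only [vspec]
    split_ifs <;> omega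
  · have ht' : t = a + k + 3 := by omega
    subst ht'
    rw [show a + k + 3 = (spec a k 0 0).length by simp, getD_append_last,
      getD_spec (by simp only [length_spec]; omega)]
    simp only [length_spec, vspec]
    split_ifs <;> omega

lemma bpad_append_bit (v : List Bool) (b : Bool) : bpad v ++ [cond b 1 0] = bpad (v ++ [b]) := by
  simp [bpad]

lemma classify : ∀ x : List ℕ, IsAscSeq x → Avoids [0, 1, 0, 2] x → Avoids [0, 1, 1, 2] x →
    Avoids [0, 1, 2, 0] x → (∃ v : List Bool, x = bpad v) ∨ ∃ a k i j, x = spec a k i j := by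
  intro x
  induction x using List.reverseRecOn with
  | nil => intro h1 _ _ _; exact absurd rfl h1.1
  | append_singleton y c ih =>
    intro h1 h2 h3 h4
    by_cases hy : y = []
    · subst hy
      have hc : c = 0 := by simpa using h1.2.1
      subst hc
      exact Or.inl ⟨[], rfl⟩
    · have hys := isAscSeq_append_elim h1 hy
      have hc := last_bound h1 hy
      rcases ih hys (avoids_append_elim h2) (avoids_append_elim h3) (avoids_append_elim h4) with
        ⟨v, rfl⟩ | ⟨a, k, i, j, rfl⟩
      · -- binary case
        set L := (bpad v).length with hL
        have hL1 : 1 ≤ L := by rw [hL]; simp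
        by_cases hc1 : c ≤ 1
        · left
          interval_cases c
          · exact ⟨v ++ [false], (bpad_append_bit v false).symm ▸ rfl⟩
          · exact ⟨v ++ [true], (bpad_append_bit v true).symm ▸ rfl⟩
        · -- c ≥ 2 : find the unique 1
          have hasc1 : 1 ≤ asc (bpad v) := by omega
          obtain ⟨jq, hjq1, hjq2⟩ : ∃ jq, jq + 1 < L ∧
              (bpad v).getD jq 0 < (bpad v).getD (jq + 1) 0 := by
            by_contra hcon
            push_neg at hcon
            have h0 : asc (bpad v) ≤ 0 - 0 := by
              apply asc_le
              intro jj hjj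
              rcases Nat.lt_or_ge (jj + 1) L with hlt | hge
              · exact absurd hjj (by have := hcon jj hlt; omega)
              · rw [List.getD_eq_default _ _ (show (bpad v).length ≤ jj + 1 by omega)] at hjj
                omega
            omega
          set q := jq + 1 with hqdef
          have hq1 : (bpad v).getD q 0 = 1 := by
            have := bpad_le_one v q; have := bpad_le_one v jq; omega
          have hq0 : 1 ≤ q := by omega
          have hx0 : (bpad v ++ [c]).getD 0 0 = 0 := by
            rw [getD_append_lt _ _ (by omega)]; exact bpad_head v
          have hxq : (bpad v ++ [c]).getD q 0 = 1 := by
            rw [getD_append_lt _ _ (by omega)]; exact hq1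
          have hxL : (bpad v ++ [c]).getD L 0 = c := getD_append_last _ _
          have hxlen : L < (bpad v ++ [c]).length := by
            rw [List.length_append, ← hL]
            simp
          have hlast : L = q + 1 := by
            by_contra hne
            have hql : q + 1 < L := by omega
            have hr := bpad_le_one v (q + 1)
            rcases Nat.lt_or_ge ((bpad v).getD (q + 1) 0) 1 with hr0 | hr1
            · apply h2
              apply contains_intro_0102 (t0 := 0) (t1 := q) (t2 := q + 1)
                (by omega) (by omega) (by omega) hxlen
              · rw [hx0, hxq]; omega
              · rw [getD_append_lt _ _ (by omega), hx0]; omega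
              · rw [hxq, hxL]; omega
            · apply h3
              apply contains_intro_0112 (t0 := 0) (t1 := q) (t2 := q + 1)
                (by omega) (by omega) (by omega) hxlen
              · rw [hx0, hxq]; omega
              · rw [getD_append_lt _ _ (by omega), hxq]; omega
              · rw [hxq, hxL]; omega
          have hbefore : ∀ r, r < q → (bpad v).getD r 0 = 0 := by
            intro r hr
            have hrle := bpad_le_one v r
            by_contra hne
            have hr1 : (bpad v).getD r 0 = 1 := by omega
            have hrpos : 1 ≤ r := by
              by_contra h'
              have hr0 : r = 0 := by omega
              rw [hr0, bpad_head] at hr1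
              omega
            apply h3
            apply contains_intro_0112 (t0 := 0) (t1 := r) (t2 := q)
              (by omega) hr (by omega) hxlen
            · rw [hx0, getD_append_lt _ _ (by omega)]; omega
            · rw [hxq, getD_append_lt _ _ (by omega)]; omega
            · rw [getD_append_lt _ _ (by omega), hxL]; omega
          have hbound : asc (bpad v) ≤ 1 := asc_binary_le (q := q) (by omega) hbefore hq1
          have hc2 : c = 2 := by omega
          subst hc2
          refine Or.inr ⟨q - 1, 0, 0, 0, ?_⟩
          apply list_eq_of_getD
            (by rw [List.length_append, length_spec, ← hL]
                simp only [List.length_singleton]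
                omega)
          intro t ht
          rw [List.length_append] at ht
          simp only [List.length_cons, List.length_nil] at ht
          rcases Nat.lt_or_ge t q with h' | h'
          · rw [getD_append_lt _ _ (by omega), hbefore t h', getD_spec (by omega)]
            simp only [vspec]
            split_ifs <;> omega
          · rcases Nat.eq_or_lt_of_le h' with h'' | h''
            · rw [← h'', getD_append_lt _ _ (by omega), hq1, getD_spec (by omega)]
              simp only [vspec]
              split_ifs <;> omega
            · have htL : t = L := by omega
              rw [htL, hxL, getD_spec (by omega)]
              simp only [vspec]
              split_ifs <;> omega
      · -- spec case
        have hcb : c ≤ k + 3 := by have := asc_spec_le a k i j; omega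
        have hxlen : a + k + i + j + 3 < (spec a k i j ++ [c]).length := by
          rw [List.length_append, length_spec]; simp
        have hxt : ∀ t, t < a + k + i + j + 3 →
            (spec a k i j ++ [c]).getD t 0 = vspec a k i t := by
          intro t ht
          rw [getD_append_lt _ _ (by rw [length_spec]; omega), getD_spec ht]
        have hxL : (spec a k i j ++ [c]).getD (a + k + i + j + 3) 0 = c := by
          rw [show a + k + i + j + 3 = (spec a k i j).length by rw [length_spec]]
          exact getD_append_last _ _
        by_cases hck : c ≤ k
        · exfalso
          apply h4
          apply contains_intro_0120 (t0 := a + c) (t1 := a + c + 1) (t2 := a + c + 2)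
            (by omega) (by omega) (by omega) hxlen
          · rw [hxt _ (by omega), hxt _ (by omega)]
            simp only [vspec]; split_ifs <;> omega
          · rw [hxt _ (by omega), hxt _ (by omega)]
            simp only [vspec]; split_ifs <;> omega
          · rw [hxL, hxt _ (by omega)]
            simp only [vspec]; split_ifs <;> omega
        by_cases hck1 : c = k + 1
        · subst hck1
          exact Or.inr ⟨a, k, i, j + 1, spec_append_lt a k i j⟩
        by_cases hck2 : c = k + 2
        · by_cases hj : j = 0
          · subst hj hck2
            exact Or.inr ⟨a, k, i + 1, 0, spec_append_eq a k i⟩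
          · exfalso
            apply h3
            apply contains_intro_0112 (t0 := 0) (t1 := a + k + 1) (t2 := a + k + i + 3)
              (by omega) (by omega) (by omega) hxlen
            · rw [hxt _ (by omega), hxt _ (by omega)]
              simp only [vspec]; split_ifs <;> omega
            · rw [hxt _ (by omega), hxt _ (by omega)]
              simp only [vspec]; split_ifs <;> omega
            · rw [hxt _ (by omega), hxL]
              simp only [vspec]; split_ifs <;> omega
        have hck3 : c = k + 3 := by omega
        by_cases hj : j = 0
        · by_cases hi : i = 0
          · subst hj hi hck3
            exact Or.inr ⟨a, k + 1, 0, 0, spec_append_succ a k⟩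
          · exfalso
            apply h3
            apply contains_intro_0112 (t0 := 0) (t1 := a + k + 2) (t2 := a + k + 3)
              (by omega) (by omega) (by omega) hxlen
            · rw [hxt _ (by omega), hxt _ (by omega)]
              simp only [vspec]; split_ifs <;> omega
            · rw [hxt _ (by omega), hxt _ (by omega)]
              simp only [vspec]; split_ifs <;> omega
            · rw [hxt _ (by omega), hxL]
              simp only [vspec]; split_ifs <;> omega
        · exfalso
          apply h3
          apply contains_intro_0112 (t0 := 0) (t1 := a + k + 1) (t2 := a + k + i + 3)
            (by omega) (by omega) (by omega) hxlen
          · rw [hxt _ (by omega), hxt _ (by omega)]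
            simp only [vspec]; split_ifs <;> omega
          · rw [hxt _ (by omega), hxt _ (by omega)]
            simp only [vspec]; split_ifs <;> omega
          · rw [hxt _ (by omega), hxL]
            simp only [vspec]; split_ifs <;> omega

/-! ### injectivity -/

lemma bpad_inj {v v' : List Bool} (h : bpad v = bpad v') : v = v' := by
  simp only [bpad, List.cons.injEq, true_and] at h
  have : Function.Injective (fun b : Bool => (cond b 1 0 : ℕ)) := by
    intro a b hab
    cases a <;> cases b <;> simp_all
  exact List.map_injective_iff.2 this h

lemma spec_inj {a k i j a' k' i' j' : ℕ} (h : spec a k i j = spec a' k' i' j') :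
    a = a' ∧ k = k' ∧ i = i' ∧ j = j' := by
  have hlen : a + k + i + j = a' + k' + i' + j' := by
    have := congrArg List.length h
    simp only [length_spec] at this
    omega
  have hpt : ∀ t, t < a + k + i + j + 3 → vspec a k i t = vspec a' k' i' t := by
    intro t ht
    rw [← getD_spec ht, h, getD_spec (by omega)]
  have ha : a = a' := by
    have h1 := hpt (a + 1) (by omega)
    have h2 := hpt (a' + 1) (by omega)
    simp only [vspec] at h1 h2
    split_ifs at h1 h2 <;> omega
  subst ha
  have hk : k = k' := by
    have h1 := hpt (a + k + 2) (by omega)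
    have h2 := hpt (a + k' + 2) (by omega)
    simp only [vspec] at h1 h2
    split_ifs at h1 h2 <;> omega
  subst hk
  have hi : i = i' := by
    have h1 := hpt (a + k + 2 + i) (by omega)
    have h2 := hpt (a + k + 2 + i') (by omega)
    simp only [vspec] at h1 h2
    split_ifs at h1 h2 <;> omega
  exact ⟨rfl, rfl, hi, by omega⟩

lemma bpad_ne_spec (v : List Bool) (a k i j : ℕ) : bpad v ≠ spec a k i j := by
  intro h
  have h1 := bpad_le_one v (a + k + 2)
  rw [h, getD_spec (by omega)] at h1
  simp only [vspec] at h1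
  split_ifs at h1 <;> omega

/-! ### counting -/

lemma card_quad (n : ℕ) :
    Nat.card {q : ℕ × ℕ × ℕ × ℕ // q.1 + q.2.1 + q.2.2.1 + q.2.2.2 + 3 = n} =
      Nat.choose n 3 := by
  rcases Nat.lt_or_ge n 3 with hn | hn
  · have : IsEmpty {q : ℕ × ℕ × ℕ × ℕ // q.1 + q.2.1 + q.2.2.1 + q.2.2.2 + 3 = n} := by
      constructor
      rintro ⟨q, hq⟩
      omega
    rw [Nat.card_of_isEmpty, Nat.choose_eq_zero_of_lt hn]
  · obtain ⟨m, rfl⟩ : ∃ m, n = m + 3 := ⟨n - 3, by omega⟩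
    have E1 : {q : ℕ × ℕ × ℕ × ℕ // q.1 + q.2.1 + q.2.2.1 + q.2.2.2 + 3 = m + 3} ≃
        {f : Fin 4 → ℕ // ∑ t, f t = m} := by
      refine ⟨fun q => ⟨![q.1.1, q.1.2.1, q.1.2.2.1, q.1.2.2.2], ?_⟩,
        fun f => ⟨(f.1 0, f.1 1, f.1 2, f.1 3), ?_⟩, ?_, ?_⟩
      · rw [Fin.sum_univ_four]
        have := q.2
        simp only [Matrix.cons_val_zero, Matrix.cons_val_one, Matrix.head_cons,
          Matrix.cons_val_two, Matrix.tail_cons, Matrix.cons_val_three]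
        omega
      · have := f.2
        rw [Fin.sum_univ_four] at this
        dsimp only
        omega
      · rintro ⟨⟨q1, q2, q3, q4⟩, hq⟩
        apply Subtype.ext
        simp
      · rintro ⟨f, hf⟩
        apply Subtype.ext
        funext t
        fin_cases t <;> simp
    have E2 : {f : Fin 4 → ℕ // ∑ t, f t = m} ≃ Sym (Fin 4) m :=
      (Sym.equivNatSumOfFintype (Fin 4) m).symm
    rw [Nat.card_congr (E1.trans E2), Nat.card_eq_fintype_card,
      Sym.card_sym_eq_choose]
    have h4 : Fintype.card (Fin 4) = 4 := by simp
    rw [h4, show 4 + m - 1 = m + 3 by omega]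
    rw [show m + 3 = (m + 3) - 3 + 3 by omega]
    rw [show (m + 3) - 3 = m by omega]
    rw [← Nat.choose_symm (show 3 ≤ m + 3 by omega), show (m + 3) - 3 = m by omega]


theorem stmt_9 (n : ℕ) (hn : 1 ≤ n) :
    Nat.card {x : List ℕ // x.length = n ∧ IsAscSeq x ∧ Avoids [0, 1, 0, 2] x ∧ Avoids [0, 1, 1, 2] x ∧ Avoids [0, 1, 2, 0] x} = 2 ^ (n - 1) + Nat.choose n 3 := by
  classical
  have hQfin : Finite {q : ℕ × ℕ × ℕ × ℕ // q.1 + q.2.1 + q.2.2.1 + q.2.2.2 + 3 = n} := by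
    apply Finite.of_injective (fun q : {q : ℕ × ℕ × ℕ × ℕ //
        q.1 + q.2.1 + q.2.2.1 + q.2.2.2 + 3 = n} =>
      ((⟨q.1.1, by have := q.2; omega⟩ : Fin n), (⟨q.1.2.1, by have := q.2; omega⟩ : Fin n),
       (⟨q.1.2.2.1, by have := q.2; omega⟩ : Fin n), (⟨q.1.2.2.2, by have := q.2; omega⟩ : Fin n)))
    rintro ⟨⟨a, b, c, d⟩, hq⟩ ⟨⟨a', b', c', d'⟩, hq'⟩ hqq
    simp only [Prod.mk.injEq, Fin.mk.injEq] at hqq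
    apply Subtype.ext
    simp_all
  let F : List.Vector Bool (n - 1) ⊕
      {q : ℕ × ℕ × ℕ × ℕ // q.1 + q.2.1 + q.2.2.1 + q.2.2.2 + 3 = n} →
      {x : List ℕ // x.length = n ∧ IsAscSeq x ∧ Avoids [0, 1, 0, 2] x ∧
        Avoids [0, 1, 1, 2] x ∧ Avoids [0, 1, 2, 0] x} := fun z =>
    match z with
    | Sum.inl v => ⟨bpad v.1, by
        refine ⟨?_, isAscSeq_bpad v.1, (avoids_bpad v.1).1, (avoids_bpad v.1).2.1,
          (avoids_bpad v.1).2.2⟩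
        rw [length_bpad, v.2]
        omega⟩
    | Sum.inr q => ⟨spec q.1.1 q.1.2.1 q.1.2.2.1 q.1.2.2.2, by
        refine ⟨?_, isAscSeq_spec _ _ _ _, (avoids_spec _ _ _ _).1, (avoids_spec _ _ _ _).2.1,
          (avoids_spec _ _ _ _).2.2⟩
        rw [length_spec]
        have := q.2
        omega⟩
  have hbij : Function.Bijective F := by
    constructor
    · rintro (v | q) (v' | q') hF
      · have h := congrArg Subtype.val hF
        simp only [F] at h
        exact congrArg Sum.inl (Subtype.ext (bpad_inj h))
      · have h := congrArg Subtype.val hF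
        simp only [F] at h
        exact absurd h (bpad_ne_spec _ _ _ _ _)
      · have h := congrArg Subtype.val hF
        simp only [F] at h
        exact absurd h.symm (bpad_ne_spec _ _ _ _ _)
      · have h := congrArg Subtype.val hF
        simp only [F] at h
        obtain ⟨h1, h2, h3, h4⟩ := spec_inj h
        congr 1
        apply Subtype.ext
        obtain ⟨⟨a, b, c, d⟩, hq⟩ := q
        obtain ⟨⟨a', b', c', d'⟩, hq'⟩ := q'
        simp_all
    · rintro ⟨x, hlen, h1, h2, h3, h4⟩
      rcases classify x h1 h2 h3 h4 with ⟨v, rfl⟩ | ⟨a, k, i, j, rfl⟩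
      · refine ⟨Sum.inl ⟨v, ?_⟩, rfl⟩
        rw [length_bpad] at hlen
        omega
      · refine ⟨Sum.inr ⟨(a, k, i, j), ?_⟩, rfl⟩
        rw [length_spec] at hlen
        show a + k + i + j + 3 = n
        omega
  rw [← Nat.card_congr (Equiv.ofBijective F hbij), Nat.card_sum, card_quad,
    Nat.card_eq_fintype_card, card_vector]
  simp
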